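/- The number of valid LRmax specifications for [n], i.e., pairs of sequences (P,M) of equal length r satisfying 1=p_1<...<p_r≤n, 1≤m_1<...<m_r=n, m_i≥p_i, and p_{i+1}≤m_i+1 for all 1≤i≤r-1, equals the Catalan number C_n = (1/(n+1))·binomial(2n,n). -/

import Mathlib

/-- A valid LRmax specification for [n] (1-indexed positions and values):
1 = p₁ < ... < p_r ≤ n, 1 ≤ m₁ < ... < m_r = n, pᵢ ≤ mᵢ, and
p_{i+1} ≤ mᵢ + 1. -/
def ValidSpec (n r : ℕ) (P M : Fin r → ℕ) : Prop :=
  0 < r ∧ StrictMono P ∧ StrictMono M ∧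
  (∀ i : Fin r, (i : ℕ) = 0 → P i = 1) ∧
  (∀ i : Fin r, (i : ℕ) = 0 → 1 ≤ M i) ∧
  (∀ i : Fin r, (i : ℕ) = r - 1 → M i = n) ∧
  (∀ i : Fin r, P i ≤ n) ∧
  (∀ i : Fin r, P i ≤ M i) ∧
  ∀ i : Fin r, ∀ h : (i : ℕ) + 1 < r, P ⟨(i : ℕ) + 1, h⟩ ≤ M i + 1

open Finset
section
def Sfun (n : ℕ) : Type := {f : Fin n → Fin n // Monotone f ∧ ∀ i : Fin n, (i : ℕ) ≤ f i}
instance (n : ℕ) : Fintype (Sfun n) := by unfold Sfun; infer_instance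
namespace Sfun
variable {n : ℕ}

lemma le_apply (f : Sfun n) (i : Fin n) : (i : ℕ) ≤ f.1 i := f.2.2 i
lemma mono_nat (f : Sfun n) {a b : Fin n} (h : (a : ℕ) ≤ (b : ℕ)) :
    (f.1 a : ℕ) ≤ f.1 b := f.2.1 h

lemma last_fixed (f : Sfun (n + 1)) : f.1 (Fin.last n) = Fin.last n := by
  have h1 := f.2.2 (Fin.last n); have h2 := (f.1 (Fin.last n)).2
  apply Fin.ext; simp only [Fin.val_last] at *; omega

def jfix (f : Sfun (n + 1)) : Fin (n + 1) :=
  (univ.filter (fun i : Fin (n+1) => f.1 i = i)).min' ⟨Fin.last n, by simpa using last_fixed f⟩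

lemma jfix_fixed (f : Sfun (n + 1)) : f.1 (jfix f) = jfix f := by
  have := min'_mem (univ.filter (fun i : Fin (n+1) => f.1 i = i)) ⟨Fin.last n, by
    simpa using last_fixed f⟩
  simpa [jfix] using this

lemma jfix_le (f : Sfun (n + 1)) {i : Fin (n + 1)} (h : f.1 i = i) : jfix f ≤ i :=
  min'_le _ _ (by simpa using h)

lemma lt_of_lt_jfix (f : Sfun (n + 1)) {i : Fin (n + 1)} (h : (i : ℕ) < jfix f) :
    (i : ℕ) < f.1 i := by
  rcases lt_or_eq_of_le (f.2.2 i) with h' | h'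
  · exact h'
  · exact absurd (jfix_le f (Fin.ext h'.symm)) (by rwa [not_le, Fin.lt_def])

lemma apply_le_jfix (f : Sfun (n + 1)) {i : Fin (n + 1)} (h : (i : ℕ) ≤ jfix f) :
    (f.1 i : ℕ) ≤ jfix f := by
  have := f.2.1 (show i ≤ jfix f from h)
  rw [jfix_fixed f] at this; exact this

section glue
variable (j : Fin (n + 1)) (g1 : Sfun (j : ℕ)) (g2 : Sfun (n - (j : ℕ)))

/-- The underlying function of the gluing. -/
def glueFun (i : Fin (n + 1)) : Fin (n + 1) :=
  if h : (i : ℕ) < (j : ℕ) then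
    ⟨(g1.1 ⟨(i : ℕ), h⟩ : ℕ) + 1, by have := (g1.1 ⟨(i : ℕ), h⟩).2; omega⟩
  else if h2 : (i : ℕ) = (j : ℕ) then j
  else ⟨(g2.1 ⟨(i : ℕ) - (j : ℕ) - 1, by have := i.2; omega⟩ : ℕ) + (j : ℕ) + 1, by
    have := (g2.1 ⟨(i : ℕ) - (j : ℕ) - 1, by have := i.2; omega⟩).2; omega⟩

lemma glueFun_of_lt {i : Fin (n + 1)} (h : (i : ℕ) < (j : ℕ)) :
    (glueFun j g1 g2 i : ℕ) = (g1.1 ⟨(i : ℕ), h⟩ : ℕ) + 1 := by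
  rw [glueFun, dif_pos h]

lemma glueFun_of_eq {i : Fin (n + 1)} (h : (i : ℕ) = (j : ℕ)) :
    (glueFun j g1 g2 i : ℕ) = (j : ℕ) := by
  rw [glueFun, dif_neg (by omega), dif_pos h]

lemma glueFun_of_gt {i : Fin (n + 1)} (h : (j : ℕ) < (i : ℕ)) :
    (glueFun j g1 g2 i : ℕ) =
      (g2.1 ⟨(i : ℕ) - (j : ℕ) - 1, by have := i.2; omega⟩ : ℕ) + (j : ℕ) + 1 := by
  rw [glueFun, dif_neg (by omega), dif_neg (by omega)]

/-- Glue two staircase functions into one with first fixed point `j`. -/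
def glue : Sfun (n + 1) := by
  refine ⟨glueFun j g1 g2, ?_, ?_⟩
  · intro a b hab
    rw [Fin.le_def] at hab ⊢
    rcases lt_trichotomy ((a : ℕ)) ((j : ℕ)) with ha | ha | ha <;>
      rcases lt_trichotomy ((b : ℕ)) ((j : ℕ)) with hb | hb | hb
    · rw [glueFun_of_lt j g1 g2 ha, glueFun_of_lt j g1 g2 hb]
      have := mono_nat g1 (a := ⟨(a : ℕ), ha⟩) (b := ⟨(b : ℕ), hb⟩) hab
      omega
    · rw [glueFun_of_lt j g1 g2 ha, glueFun_of_eq j g1 g2 hb]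
      have := (g1.1 ⟨(a : ℕ), ha⟩).2
      omega
    · rw [glueFun_of_lt j g1 g2 ha, glueFun_of_gt j g1 g2 hb]
      have := (g1.1 ⟨(a : ℕ), ha⟩).2
      omega
    · omega
    · rw [glueFun_of_eq j g1 g2 ha, glueFun_of_eq j g1 g2 hb]
    · rw [glueFun_of_eq j g1 g2 ha, glueFun_of_gt j g1 g2 hb]
      omega
    · omega
    · omega
    · rw [glueFun_of_gt j g1 g2 ha, glueFun_of_gt j g1 g2 hb]
      have := mono_nat g2 (a := ⟨(a : ℕ) - (j : ℕ) - 1, by have := a.2; omega⟩)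
        (b := ⟨(b : ℕ) - (j : ℕ) - 1, by have := b.2; omega⟩) (by simp only [Fin.mk_le_mk]; omega)
      omega
  · intro i
    rcases lt_trichotomy ((i : ℕ)) ((j : ℕ)) with h | h | h
    · rw [glueFun_of_lt j g1 g2 h]
      have := g1.2.2 ⟨(i : ℕ), h⟩
      simp only [Fin.val_mk] at this
      omega
    · rw [glueFun_of_eq j g1 g2 h]
      omega
    · rw [glueFun_of_gt j g1 g2 h]
      have := g2.2.2 ⟨(i : ℕ) - (j : ℕ) - 1, by have := i.2; omega⟩
      simp only [Fin.val_mk] at this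
      omega

lemma jfix_glue : jfix (glue j g1 g2) = j := by
  apply le_antisymm
  · exact jfix_le _ (Fin.ext (glueFun_of_eq j g1 g2 rfl))
  · rw [Fin.le_def]
    by_contra hc
    push_neg at hc
    have h1 := congrArg Fin.val (jfix_fixed (glue j g1 g2))
    have h2 : ((glue j g1 g2).1 (jfix (glue j g1 g2)) : ℕ) =
        (g1.1 ⟨((jfix (glue j g1 g2) : ℕ)), hc⟩ : ℕ) + 1 := glueFun_of_lt j g1 g2 hc
    have h3 := g1.2.2 ⟨((jfix (glue j g1 g2) : ℕ)), hc⟩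
    simp only [Fin.val_mk] at h3
    omega

end glue

section parts
variable (f : Sfun (n + 1)) {j : Fin (n + 1)}

/-- Restriction below the first fixed point. -/
def part1 (hf : (jfix f : ℕ) = (j : ℕ)) : Sfun (j : ℕ) := by
  have hle : (j : ℕ) ≤ n + 1 := j.2.le
  refine ⟨fun i => ⟨(f.1 (Fin.castLE hle i) : ℕ) - 1, ?_⟩, ?_, ?_⟩
  · have hlt : ((Fin.castLE hle i : Fin (n + 1)) : ℕ) < jfix f := by
      rw [Fin.coe_castLE]; omega
    have h2 := lt_of_lt_jfix f hlt
    have h3 := apply_le_jfix f hlt.le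
    rw [Fin.coe_castLE] at h2
    omega
  · intro a b hab
    have := mono_nat f (a := Fin.castLE hle a) (b := Fin.castLE hle b)
      (by rw [Fin.coe_castLE, Fin.coe_castLE]; exact hab)
    simp only [Fin.mk_le_mk]
    omega
  · intro i
    have hlt : ((Fin.castLE hle i : Fin (n + 1)) : ℕ) < jfix f := by
      rw [Fin.coe_castLE]; omega
    have h2 := lt_of_lt_jfix f hlt
    rw [Fin.coe_castLE] at h2
    show (i : ℕ) ≤ (f.1 (Fin.castLE hle i) : ℕ) - 1
    omega

/-- Restriction above the first fixed point. -/
def part2 (j : Fin (n + 1)) : Sfun (n - (j : ℕ)) := by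
  refine ⟨fun i => ⟨(f.1 ⟨(j : ℕ) + 1 + (i : ℕ), by have := i.2; omega⟩ : ℕ) - ((j : ℕ) + 1),
    ?_⟩, ?_, ?_⟩
  · have h2 := (f.1 ⟨(j : ℕ) + 1 + (i : ℕ), by have := i.2; omega⟩).2
    have := i.2
    omega
  · intro a b hab
    have := mono_nat f (a := ⟨(j : ℕ) + 1 + (a : ℕ), by have := a.2; omega⟩)
      (b := ⟨(j : ℕ) + 1 + (b : ℕ), by have := b.2; omega⟩) (by simp only [Fin.val_mk]; omega)
    simp only [Fin.mk_le_mk]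
    omega
  · intro i
    have h3 := le_apply f ⟨(j : ℕ) + 1 + (i : ℕ), by have := i.2; omega⟩
    simp only [Fin.val_mk] at h3
    show (i : ℕ) ≤ (f.1 ⟨(j : ℕ) + 1 + (i : ℕ), by have := i.2; omega⟩ : ℕ) - ((j : ℕ) + 1)
    omega

end parts

/-- Decomposition of a staircase function at its first fixed point `j`. -/
def fiberEquiv (j : Fin (n + 1)) :
    {f : Sfun (n + 1) // jfix f = j} ≃ Sfun (j : ℕ) × Sfun (n - (j : ℕ)) where
  toFun := fun s => (part1 s.1 (congrArg Fin.val s.2), part2 s.1 j)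
  invFun := fun g => ⟨glue j g.1 g.2, jfix_glue j g.1 g.2⟩
  left_inv := fun s => by
    obtain ⟨f, hf⟩ := s
    apply Subtype.ext
    apply Subtype.ext
    funext i
    apply Fin.ext
    show (glueFun j _ _ i : ℕ) = ((f.1 i : ℕ))
    rcases lt_trichotomy ((i : ℕ)) ((j : ℕ)) with h | h | h
    · rw [glueFun_of_lt _ _ _ h]
      have h2 := lt_of_lt_jfix f (i := i) (by rw [congrArg Fin.val hf]; exact h)
      show (f.1 (Fin.castLE _ ⟨(i : ℕ), h⟩) : ℕ) - 1 + 1 = _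
      have he : (Fin.castLE j.2.le ⟨(i : ℕ), h⟩ : Fin (n + 1)) = i := Fin.ext rfl
      rw [he]
      omega
    · rw [glueFun_of_eq _ _ _ h]
      have hij : i = jfix f := by rw [hf]; exact Fin.ext h
      have h2 : f.1 i = i := by rw [hij]; exact jfix_fixed f
      rw [h2]
      exact h.symm
    · rw [glueFun_of_gt _ _ _ h]
      show (f.1 ⟨(j : ℕ) + 1 + ((i : ℕ) - (j : ℕ) - 1), _⟩ : ℕ) - ((j : ℕ) + 1) + (j : ℕ) + 1 = _
      have harg : (⟨(j : ℕ) + 1 + ((i : ℕ) - (j : ℕ) - 1), by omega⟩ : Fin (n + 1)) = i :=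
        Fin.ext (by show (j : ℕ) + 1 + ((i : ℕ) - (j : ℕ) - 1) = (i : ℕ); omega)
      rw [harg]
      have := le_apply f i
      omega
  right_inv := fun g => by
    obtain ⟨g1, g2⟩ := g
    have e1 : part1 (glue j g1 g2) (congrArg Fin.val (jfix_glue j g1 g2)) = g1 := by
      apply Subtype.ext
      funext i
      apply Fin.ext
      show ((glue j g1 g2).1 (Fin.castLE _ i) : ℕ) - 1 = _
      have hv : (glue j g1 g2).1 = glueFun j g1 g2 := rfl
      rw [hv]
      rw [show ((glueFun j g1 g2) (Fin.castLE j.2.le i) : ℕ) =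
        (g1.1 ⟨((Fin.castLE j.2.le i : Fin (n+1)) : ℕ), by rw [Fin.coe_castLE]; exact i.2⟩ : ℕ) + 1
        from glueFun_of_lt j g1 g2 (by rw [Fin.coe_castLE]; exact i.2)]
      have harg : (⟨((Fin.castLE j.2.le i : Fin (n+1)) : ℕ), by rw [Fin.coe_castLE]; exact i.2⟩ :
          Fin (j : ℕ)) = i := Fin.ext rfl
      rw [harg]
      omega
    have e2 : part2 (glue j g1 g2) j = g2 := by
      apply Subtype.ext
      funext i
      apply Fin.ext
      show ((glue j g1 g2).1 ⟨(j : ℕ) + 1 + (i : ℕ), _⟩ : ℕ) - ((j : ℕ) + 1) = _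
      have hv : (glue j g1 g2).1 = glueFun j g1 g2 := rfl
      rw [hv]
      rw [glueFun_of_gt j g1 g2 (i := ⟨(j : ℕ) + 1 + (i : ℕ), by have := i.2; omega⟩)
        (by show (j : ℕ) < (j : ℕ) + 1 + (i : ℕ); omega)]
      have harg : (⟨((⟨(j : ℕ) + 1 + (i : ℕ), by have := i.2; omega⟩ : Fin (n + 1)) : ℕ) - (j : ℕ)
          - 1, by show (j:ℕ)+1+(i:ℕ)-(j:ℕ)-1 < n - (j:ℕ); have := i.2; omega⟩ :
          Fin (n - (j : ℕ))) = i := Fin.ext (by show (j:ℕ)+1+(i:ℕ)-(j:ℕ)-1 = (i:ℕ); omega)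
      rw [harg]
      omega
    show (part1 _ _, part2 _ _) = (g1, g2)
    rw [e1, e2]

theorem card_sfun : ∀ n, Fintype.card (Sfun n) = catalan n := by
  intro n
  induction n using Nat.strong_induction_on with
  | _ n ih =>
    match n with
    | 0 =>
      rw [catalan_zero]
      rw [Fintype.card_eq_one_iff]
      refine ⟨⟨finZeroElim, by intro a b h; exact absurd a.2 (by omega),
        fun i => absurd i.2 (by omega)⟩, ?_⟩
      intro g
      apply Subtype.ext
      funext i
      exact absurd i.2 (by omega)
    | (m + 1) =>
      rw [catalan_succ]
      have h1 : Fintype.card (Sfun (m + 1)) =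
          ∑ j : Fin (m + 1), Fintype.card {f : Sfun (m + 1) // jfix f = j} := by
        classical
        rw [← Fintype.card_sigma]
        exact Fintype.card_congr (Equiv.sigmaFiberEquiv jfix).symm
      rw [h1]
      congr 1
      funext j
      classical
      rw [Fintype.card_congr (fiberEquiv j), Fintype.card_prod,
        ih (j : ℕ) (by omega), ih (m - (j : ℕ)) (by omega)]

end Sfun
end

namespace SpecSide
variable {n : ℕ}

/-- The set of jump points of a staircase function. -/
def J (f : Sfun n) : Finset (Fin n) :=
  univ.filter (fun p => ∀ k : Fin n, (k : ℕ) + 1 = (p : ℕ) → f.1 k < f.1 p)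

lemma mem_J {f : Sfun n} {p : Fin n} :
    p ∈ J f ↔ ∀ k : Fin n, (k : ℕ) + 1 = (p : ℕ) → (f.1 k : ℕ) < f.1 p := by
  unfold J
  rw [mem_filter]
  simp only [mem_univ, true_and, Fin.lt_def]

lemma zero_mem_J (hn : 0 < n) (f : Sfun n) : (⟨0, hn⟩ : Fin n) ∈ J f := by
  rw [mem_J]
  intro k hk
  simp only [Fin.val_mk] at hk
  omega

lemma J_nonempty (hn : 0 < n) (f : Sfun n) : (J f).Nonempty := ⟨_, zero_mem_J hn f⟩

/-- Strictly increasing across jumps. -/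
lemma jump_strict {f : Sfun n} {p q : Fin n} (hp : p ∈ J f) (hq : q ∈ J f)
    (hpq : (p : ℕ) < (q : ℕ)) : (f.1 p : ℕ) < f.1 q := by
  have hq1 : 1 ≤ (q : ℕ) := by omega
  have hk := mem_J.1 hq ⟨(q : ℕ) - 1, by omega⟩ (by simp only [Fin.val_mk]; omega)
  have h2 := Sfun.mono_nat f (a := p) (b := ⟨(q : ℕ) - 1, by omega⟩)
    (by simp only [Fin.val_mk]; omega)
  omega

/-- The maximal jump point `≤ j` has the same value as `j`. -/
lemma jump_rep (f : Sfun n) : ∀ m : ℕ, ∀ j : Fin n, (j : ℕ) = m →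
    ∃ p ∈ J f, (p : ℕ) ≤ (j : ℕ) ∧ f.1 p = f.1 j ∧
      ∀ q ∈ J f, (q : ℕ) ≤ (j : ℕ) → (q : ℕ) ≤ (p : ℕ) := by
  intro m
  induction m using Nat.strong_induction_on with
  | _ m ih =>
    intro j hj
    by_cases hJ : j ∈ J f
    · exact ⟨j, hJ, le_refl _, rfl, fun q _ hq => hq⟩
    · have h0 : (j : ℕ) ≠ 0 := by
        intro h
        exact hJ (by rw [show j = ⟨0, by omega⟩ from Fin.ext h]; exact zero_mem_J (by omega) f)
      set k : Fin n := ⟨(j : ℕ) - 1, by have := j.2; omega⟩ with hkdef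
      have hkj : (k : ℕ) + 1 = (j : ℕ) := by simp only [hkdef, Fin.val_mk]; omega
      have hkval : f.1 k = f.1 j := by
        apply Fin.ext
        have h1 := Sfun.mono_nat f (a := k) (b := j) (by omega)
        rw [mem_J] at hJ
        push_neg at hJ
        obtain ⟨k', hk', hk'2⟩ := hJ
        have : k' = k := Fin.ext (by omega)
        rw [this] at hk'2
        omega
      obtain ⟨p, hp, hple, hpf, hmax⟩ := ih ((j : ℕ) - 1) (by omega) k (by omega)
      refine ⟨p, hp, by omega, hpf.trans hkval, fun q hq hqj => ?_⟩
      have hqj' : (q : ℕ) ≤ (k : ℕ) := by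
        rcases lt_or_eq_of_le hqj with h | h
        · omega
        · exact absurd hq (by rw [show q = j from Fin.ext h]; exact hJ)
      exact hmax q hq hqj'

lemma fn_last (hn : 0 < n) (f : Sfun n) : (f.1 ⟨n - 1, by omega⟩ : ℕ) = n - 1 := by
  have h1 := Sfun.le_apply f ⟨n - 1, by omega⟩
  have h2 := (f.1 ⟨n - 1, by omega⟩).2
  simp only [Fin.val_mk] at h1
  omega

end SpecSide

section ToSpec
open SpecSide
variable {n : ℕ}

/-- enumeration of jumps -/
noncomputable def emb (f : Sfun n) : Fin ((J f).card) ↪o Fin n := (J f).orderEmbOfFin rfl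

lemma emb_mem (f : Sfun n) (i : Fin ((J f).card)) : emb f i ∈ J f :=
  Finset.orderEmbOfFin_mem _ _ _

lemma emb_surj (f : Sfun n) {p : Fin n} (hp : p ∈ J f) : ∃ i, emb f i = p := by
  have h := Finset.range_orderEmbOfFin (J f) (rfl : (J f).card = (J f).card)
  have : p ∈ Set.range ⇑((J f).orderEmbOfFin rfl) := by rw [h]; exact hp
  exact this

lemma emb_zero (hn : 0 < n) (f : Sfun n) {i : Fin ((J f).card)} (hi : (i : ℕ) = 0) :
    (emb f i : ℕ) = 0 := by
  have hpos : 0 < (J f).card := Finset.card_pos.2 (J_nonempty hn f)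
  have : i = ⟨0, hpos⟩ := Fin.ext hi
  rw [this]
  show ((J f).orderEmbOfFin rfl ⟨0, hpos⟩ : Fin n).val = 0
  rw [Finset.orderEmbOfFin_zero rfl hpos]
  have h1 := Finset.min'_le (J f) ⟨0, hn⟩ (zero_mem_J hn f)
  have h2 := ((J f).min' (J_nonempty hn f)).2
  rw [Fin.le_def] at h1
  simp only [Fin.val_mk] at h1
  omega

lemma emb_last (hn : 0 < n) (f : Sfun n) {i : Fin ((J f).card)}
    (hi : (i : ℕ) = (J f).card - 1) : f.1 (emb f i) = ⟨n - 1, by omega⟩ := by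
  have hpos : 0 < (J f).card := Finset.card_pos.2 (J_nonempty hn f)
  have : i = ⟨(J f).card - 1, by omega⟩ := Fin.ext hi
  rw [this]
  show f.1 ((J f).orderEmbOfFin rfl ⟨(J f).card - 1, _⟩) = _
  rw [Finset.orderEmbOfFin_last rfl hpos]
  obtain ⟨p, hp, hple, hpf, hmax⟩ := jump_rep f (n - 1) ⟨n - 1, by omega⟩ (by simp)
  have hmaxeq : (J f).max' (J_nonempty hn f) = p := by
    apply le_antisymm
    · rw [Fin.le_def]
      refine hmax _ (Finset.max'_mem _ _) ?_
      have := ((J f).max' (J_nonempty hn f)).2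
      simp only [Fin.val_mk]
      omega
    · exact Finset.le_max' _ _ hp
  rw [hmaxeq, hpf]
  apply Fin.ext
  simp only [Fin.val_mk]
  exact fn_last hn f

/-- the LRmax specification associated to a staircase function -/
noncomputable def toSpec (f : Sfun n) : Σ r : ℕ, (Fin r → ℕ) × (Fin r → ℕ) :=
  ⟨(J f).card, fun i => (emb f i : ℕ) + 1, fun i => (f.1 (emb f i) : ℕ) + 1⟩

lemma toSpec_valid (hn : 0 < n) (f : Sfun n) :
    ValidSpec n (toSpec f).1 (toSpec f).2.1 (toSpec f).2.2 := by
  refine ⟨Finset.card_pos.2 (J_nonempty hn f), ?_, ?_, ?_, ?_, ?_, ?_, ?_, ?_⟩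
  · intro a b hab
    have := (emb f).strictMono hab
    rw [Fin.lt_def] at this
    show (emb f a : ℕ) + 1 < (emb f b : ℕ) + 1
    omega
  · intro a b hab
    have h1 := (emb f).strictMono hab
    rw [Fin.lt_def] at h1
    have := jump_strict (emb_mem f a) (emb_mem f b) h1
    show (f.1 (emb f a) : ℕ) + 1 < (f.1 (emb f b) : ℕ) + 1
    omega
  · intro i hi
    show (emb f i : ℕ) + 1 = 1
    rw [emb_zero hn f hi]
  · intro i _
    show 1 ≤ (f.1 (emb f i) : ℕ) + 1
    omega
  · intro i hi
    show (f.1 (emb f i) : ℕ) + 1 = n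
    rw [emb_last hn f hi]
    simp only [Fin.val_mk]
    omega
  · intro i
    show (emb f i : ℕ) + 1 ≤ n
    have := (emb f i).2
    omega
  · intro i
    show (emb f i : ℕ) + 1 ≤ (f.1 (emb f i) : ℕ) + 1
    have := Sfun.le_apply f (emb f i)
    omega
  · intro i h
    show (emb f ⟨(i : ℕ) + 1, h⟩ : ℕ) + 1 ≤ (f.1 (emb f i) : ℕ) + 1 + 1
    have hlt : (emb f i : ℕ) < emb f ⟨(i : ℕ) + 1, h⟩ := by
      have := (emb f).strictMono (show i < ⟨(i : ℕ) + 1, h⟩ by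
        rw [Fin.lt_def]; simp only [Fin.val_mk]; omega)
      rwa [Fin.lt_def] at this
    set b : Fin n := ⟨(emb f ⟨(i : ℕ) + 1, h⟩ : ℕ) - 1, by
      have := (emb f ⟨(i : ℕ) + 1, h⟩).2; omega⟩ with hbdef
    have hbval : (b : ℕ) = (emb f ⟨(i : ℕ) + 1, h⟩ : ℕ) - 1 := rfl
    obtain ⟨p, hp, hple, hpf, hmax⟩ := jump_rep f (b : ℕ) b rfl
    obtain ⟨ip, hip⟩ := emb_surj f hp
    have h1 : (emb f i : ℕ) ≤ (p : ℕ) := hmax _ (emb_mem f i) (by omega)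
    have h2 : (ip : ℕ) < (i : ℕ) + 1 := by
      by_contra hc
      push_neg at hc
      have : emb f ⟨(i : ℕ) + 1, h⟩ ≤ emb f ip :=
        (emb f).monotone (by rw [Fin.le_def]; simp only [Fin.val_mk]; omega)
      rw [Fin.le_def, hip] at this
      omega
    have h3 : (ip : ℕ) ≥ (i : ℕ) := by
      by_contra hc
      push_neg at hc
      have : emb f ip < emb f i := (emb f).strictMono (Fin.lt_def.2 hc)
      rw [Fin.lt_def, hip] at this
      omega
    have hipe : ip = i := Fin.ext (by omega)
    rw [hipe] at hip
    have h4 : (f.1 p : ℕ) = f.1 b := by rw [hpf]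
    have h5 := Sfun.le_apply f b
    rw [← hip] at h4
    omega

end ToSpec

section FromSpec
open SpecSide
variable {n r : ℕ} {P M : Fin r → ℕ}

lemma P_ge_one (hv : ValidSpec n r P M) (i : Fin r) : 1 ≤ P i := by
  have h0 := hv.2.2.2.1 ⟨0, hv.1⟩ rfl
  have := hv.2.1.monotone (a := ⟨0, hv.1⟩) (b := i) (by rw [Fin.le_def]; simp)
  omega

lemma M_le_n (hv : ValidSpec n r P M) (i : Fin r) : M i ≤ n := by
  have hl := hv.2.2.2.2.2.1 ⟨r - 1, by have := hv.1; omega⟩ (by simp)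
  have := hv.2.2.1.monotone (a := i) (b := ⟨r - 1, by have := hv.1; omega⟩)
    (by rw [Fin.le_def]; simp only [Fin.val_mk]; have := i.2; omega)
  omega

lemma M_ge_one (hv : ValidSpec n r P M) (i : Fin r) : 1 ≤ M i := by
  have := hv.2.2.2.2.2.2.2.1 i
  have := P_ge_one hv i
  omega

/-- index of the last spec position `≤ j + 1` -/
def ix (hv : ValidSpec n r P M) (j : Fin n) : Fin r :=
  (univ.filter (fun i : Fin r => P i ≤ (j : ℕ) + 1)).max' ⟨⟨0, hv.1⟩, by
    simp only [mem_filter, mem_univ, true_and]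
    have := hv.2.2.2.1 ⟨0, hv.1⟩ rfl
    omega⟩

lemma ix_le (hv : ValidSpec n r P M) (j : Fin n) : P (ix hv j) ≤ (j : ℕ) + 1 := by
  have := Finset.max'_mem (univ.filter (fun i : Fin r => P i ≤ (j : ℕ) + 1))
  have h2 := this ⟨⟨0, hv.1⟩, by
    simp only [mem_filter, mem_univ, true_and]
    have := hv.2.2.2.1 ⟨0, hv.1⟩ rfl
    omega⟩
  rw [mem_filter] at h2
  exact h2.2

lemma le_ix (hv : ValidSpec n r P M) (j : Fin n) {i : Fin r} (h : P i ≤ (j : ℕ) + 1) :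
    i ≤ ix hv j :=
  Finset.le_max' _ _ (by simp only [mem_filter, mem_univ, true_and]; exact h)

lemma M_ix_ge (hv : ValidSpec n r P M) (j : Fin n) : (j : ℕ) + 1 ≤ M (ix hv j) := by
  by_cases h : (ix hv j : ℕ) + 1 < r
  · have hstep := hv.2.2.2.2.2.2.2.2 (ix hv j) h
    have hnot : ¬ P ⟨(ix hv j : ℕ) + 1, h⟩ ≤ (j : ℕ) + 1 := by
      intro hc
      have := le_ix hv j hc
      rw [Fin.le_def] at this
      simp only [Fin.val_mk] at this
      omega
    omega
  · have hlast : (ix hv j : ℕ) = r - 1 := by have := (ix hv j).2; omega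
    rw [hv.2.2.2.2.2.1 _ hlast]
    have := j.2
    omega

/-- the staircase function associated to an LRmax specification -/
def fromSpec (hv : ValidSpec n r P M) : Sfun n := by
  refine ⟨fun j => ⟨M (ix hv j) - 1, ?_⟩, ?_, ?_⟩
  · have h1 := M_le_n hv (ix hv j)
    have h2 := M_ix_ge hv j
    have := j.2
    omega
  · intro a b hab
    rw [Fin.le_def] at hab
    have hixm : ix hv a ≤ ix hv b := le_ix hv b (by have := ix_le hv a; omega)
    have := hv.2.2.1.monotone hixm
    simp only [Fin.mk_le_mk]
    omega
  · intro j
    have := M_ix_ge hv j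
    show (j : ℕ) ≤ M (ix hv j) - 1
    omega

lemma fromSpec_val (hv : ValidSpec n r P M) (j : Fin n) :
    ((fromSpec hv).1 j : ℕ) = M (ix hv j) - 1 := rfl

end FromSpec

section RoundTrips
open SpecSide
variable {n : ℕ}

/-- Round trip 1: staircase → spec → staircase. -/
lemma fromSpec_toSpec (hn : 0 < n) (f : Sfun n) : fromSpec (toSpec_valid hn f) = f := by
  apply Subtype.ext
  funext j
  apply Fin.ext
  set hv := toSpec_valid hn f with hhv
  rw [fromSpec_val hv j]
  show (f.1 (emb f (ix hv j)) : ℕ) + 1 - 1 = (f.1 j : ℕ)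
  obtain ⟨p, hp, hple, hpf, hmax⟩ := jump_rep f (j : ℕ) j rfl
  have hixle : (emb f (ix hv j) : ℕ) + 1 ≤ (j : ℕ) + 1 := ix_le hv j
  have h1 : (emb f (ix hv j) : ℕ) ≤ (p : ℕ) := hmax _ (emb_mem f _) (by omega)
  obtain ⟨ip, hip⟩ := emb_surj f hp
  have h2 : ip ≤ ix hv j := le_ix hv j (show (emb f ip : ℕ) + 1 ≤ (j : ℕ) + 1 by rw [hip]; omega)
  have h3 : (emb f ip : ℕ) ≤ (emb f (ix hv j) : ℕ) := by
    have := (emb f).monotone h2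
    rwa [Fin.le_def] at this
  have h4 : emb f (ix hv j) = p := Fin.ext (by rw [hip] at h3; omega)
  rw [h4, hpf]
  omega

variable {r : ℕ} {P M : Fin r → ℕ}

lemma mem_J_fromSpec (hv : ValidSpec n r P M) (q : Fin n) :
    q ∈ J (fromSpec hv) ↔ ∃ i : Fin r, P i = (q : ℕ) + 1 := by
  rcases Nat.eq_zero_or_pos (q : ℕ) with h0 | h0
  · constructor
    · intro _
      exact ⟨⟨0, hv.1⟩, by rw [hv.2.2.2.1 ⟨0, hv.1⟩ rfl, h0]⟩
    · intro _
      rw [show q = ⟨0, by have := q.2; omega⟩ from Fin.ext h0]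
      exact zero_mem_J (by have := q.2; omega) _
  · set k : Fin n := ⟨(q : ℕ) - 1, by have := q.2; omega⟩ with hkdef
    have hk : (k : ℕ) + 1 = (q : ℕ) := by simp only [hkdef, Fin.val_mk]; omega
    have hJiff : q ∈ J (fromSpec hv) ↔
        ((fromSpec hv).1 k : ℕ) < ((fromSpec hv).1 q : ℕ) := by
      rw [mem_J]
      constructor
      · intro h; exact h k hk
      · intro h k' hk'
        rwa [show k' = k from Fin.ext (by omega)]
    rw [hJiff, fromSpec_val, fromSpec_val]
    have hM1 := M_ge_one hv (ix hv k)
    have hM2 := M_ge_one hv (ix hv q)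
    have hmono := hv.2.2.1
    constructor
    · intro h
      have hx : ix hv k < ix hv q := by
        by_contra hc
        push_neg at hc
        have := hmono.monotone hc
        omega
      refine ⟨ix hv q, ?_⟩
      have hle := ix_le hv q
      by_contra hne
      have hle2 : P (ix hv q) ≤ (k : ℕ) + 1 := by omega
      have := le_ix hv k hle2
      exact absurd (lt_of_lt_of_le hx this) (lt_irrefl _)
    · rintro ⟨i, hi⟩
      have h1 : i ≤ ix hv q := le_ix hv q (by omega)
      have h2 : ¬ i ≤ ix hv k := by
        intro hc
        have hm := hv.2.1.monotone hc
        have := ix_le hv k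
        omega
      have hx : ix hv k < ix hv q := lt_of_lt_of_le (not_le.1 h2) h1
      have := hmono hx
      omega

/-- jump positions as elements of `Fin n`. -/
def Pfin (hn : 0 < n) (hv : ValidSpec n r P M) : Fin r → Fin n := fun i =>
  ⟨P i - 1, by have := hv.2.2.2.2.2.2.1 i; omega⟩

lemma Pfin_val (hn : 0 < n) (hv : ValidSpec n r P M) (i : Fin r) :
    (Pfin hn hv i : ℕ) = P i - 1 := rfl

lemma J_fromSpec_eq (hn : 0 < n) (hv : ValidSpec n r P M) :
    J (fromSpec hv) = image (Pfin hn hv) univ := by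
  ext q
  rw [mem_J_fromSpec hv q, mem_image]
  constructor
  · rintro ⟨i, hi⟩
    exact ⟨i, mem_univ i, Fin.ext (by rw [Pfin_val]; omega)⟩
  · rintro ⟨i, -, hi⟩
    refine ⟨i, ?_⟩
    have hval := congrArg Fin.val hi
    rw [Pfin_val] at hval
    have := P_ge_one hv i
    omega

lemma Pfin_injective (hn : 0 < n) (hv : ValidSpec n r P M) :
    Function.Injective (Pfin hn hv) := by
  intro a b hab
  have hval := congrArg Fin.val hab
  rw [Pfin_val, Pfin_val] at hval
  have ha := P_ge_one hv a
  have hb := P_ge_one hv b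
  exact hv.2.1.injective (by omega)

lemma card_J_fromSpec (hn : 0 < n) (hv : ValidSpec n r P M) :
    (J (fromSpec hv)).card = r := by
  rw [J_fromSpec_eq hn hv, Finset.card_image_of_injective _ (Pfin_injective hn hv),
    card_univ, Fintype.card_fin]

lemma Pfin_strictMono (hn : 0 < n) (hv : ValidSpec n r P M) :
    StrictMono (Pfin hn hv) := by
  intro a b hab
  rw [Fin.lt_def, Pfin_val, Pfin_val]
  have := hv.2.1 hab
  have := P_ge_one hv a
  omega

lemma emb_fromSpec (hn : 0 < n) (hv : ValidSpec n r P M)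
    (i : Fin ((J (fromSpec hv)).card)) :
    emb (fromSpec hv) i = Pfin hn hv (Fin.cast (card_J_fromSpec hn hv) i) := by
  have hu := Finset.orderEmbOfFin_unique (s := J (fromSpec hv))
    (rfl : (J (fromSpec hv)).card = (J (fromSpec hv)).card)
    (f := fun i => Pfin hn hv (Fin.cast (card_J_fromSpec hn hv) i))
    (fun x => by
      rw [mem_J_fromSpec hv]
      refine ⟨Fin.cast (card_J_fromSpec hn hv) x, ?_⟩
      rw [Pfin_val]
      have := P_ge_one hv (Fin.cast (card_J_fromSpec hn hv) x)
      omega)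
    (fun a b hab => Pfin_strictMono hn hv (by rwa [Fin.lt_def] at hab ⊢))
  exact (congrFun hu i).symm

lemma ix_Pfin (hn : 0 < n) (hv : ValidSpec n r P M) (i0 : Fin r) :
    ix hv (Pfin hn hv i0) = i0 := by
  have hp1 := P_ge_one hv i0
  apply le_antisymm
  · have h1 := ix_le hv (Pfin hn hv i0)
    rw [Pfin_val] at h1
    by_contra hc
    push_neg at hc
    have := hv.2.1 hc
    omega
  · exact le_ix hv _ (by rw [Pfin_val]; omega)

/-- Equality of sigma components. -/
lemma sigma_eq {r r' : ℕ} {P M : Fin r → ℕ} {P' M' : Fin r' → ℕ} (h : r = r')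
    (hP : ∀ i : Fin r', P (Fin.cast h.symm i) = P' i)
    (hM : ∀ i : Fin r', M (Fin.cast h.symm i) = M' i) :
    (⟨r, (P, M)⟩ : Σ r : ℕ, (Fin r → ℕ) × (Fin r → ℕ)) = ⟨r', (P', M')⟩ := by
  subst h
  have hP' : P = P' := funext fun i => hP i
  have hM' : M = M' := funext fun i => hM i
  rw [hP', hM']

/-- Round trip 2: spec → staircase → spec. -/
lemma toSpec_fromSpec (hn : 0 < n) (hv : ValidSpec n r P M) :
    toSpec (fromSpec hv) = ⟨r, (P, M)⟩ := by
  refine sigma_eq (card_J_fromSpec hn hv) (fun i => ?_) (fun i => ?_)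
  · show (emb (fromSpec hv) (Fin.cast (card_J_fromSpec hn hv).symm i) : ℕ) + 1 = P i
    rw [emb_fromSpec hn hv, Pfin_val]
    have hcast : Fin.cast (card_J_fromSpec hn hv) (Fin.cast (card_J_fromSpec hn hv).symm i) = i :=
      Fin.ext rfl
    rw [hcast]
    have := P_ge_one hv i
    omega
  · show ((fromSpec hv).1 (emb (fromSpec hv) (Fin.cast (card_J_fromSpec hn hv).symm i)) : ℕ)
      + 1 = M i
    rw [emb_fromSpec hn hv]
    have hcast : Fin.cast (card_J_fromSpec hn hv) (Fin.cast (card_J_fromSpec hn hv).symm i) = i :=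
      Fin.ext rfl
    rw [hcast, fromSpec_val, ix_Pfin hn hv i]
    have := M_ge_one hv i
    omega

end RoundTrips

section Final
open SpecSide
variable {n : ℕ}

/-- The equivalence between LRmax specifications and staircase functions. -/
noncomputable def specEquiv (hn : 0 < n) :
    {s : Σ r : ℕ, (Fin r → ℕ) × (Fin r → ℕ) // ValidSpec n s.1 s.2.1 s.2.2} ≃ Sfun n where
  toFun s := fromSpec s.2
  invFun f := ⟨toSpec f, toSpec_valid hn f⟩
  left_inv s := by
    obtain ⟨⟨r, PM⟩, hv⟩ := s
    obtain ⟨P, M⟩ := PM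
    exact Subtype.ext (toSpec_fromSpec hn hv)
  right_inv f := fromSpec_toSpec hn f

end Final

theorem stmt2 (n : ℕ) (hn : 0 < n) :
    Nat.card {s : Σ r : ℕ, (Fin r → ℕ) × (Fin r → ℕ) //
        ValidSpec n s.1 s.2.1 s.2.2} =
      Nat.choose (2 * n) n / (n + 1) := by
  rw [Nat.card_congr (specEquiv hn), Nat.card_eq_fintype_card, Sfun.card_sfun,
    catalan_eq_centralBinom_div]
  rfl
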